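/- Let d ≥ 2 and let G be a closed fractal subgroup of Aut T_d. If H is an open normal subgroup of G that is pronilpotent, then the self-similar closure of H in G is an open, normal, pronilpotent subgroup of G. -/

import Mathlib

open scoped Pointwise

namespace TreeDyn

/-- Vertices of the `d`-regular rooted tree: finite words over `{0,…,d-1}`,
with the empty word as root and children of `w` the words `w ++ [x]`. -/
abbrev Vertex (d : ℕ) := List (Fin d)

/-- A function on words is length-preserving and prefix-preserving. -/
def LP (d : ℕ) (f : Vertex d → Vertex d) : Prop :=
  (∀ w : Vertex d, (f w).length = w.length) ∧
    ∀ v w : Vertex d, v <+: w → f v <+: f w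

theorem LP.id' (d : ℕ) : LP d id := ⟨fun _ => rfl, fun _ _ h => h⟩

theorem LP.comp {d : ℕ} {f g : Vertex d → Vertex d} (hf : LP d f) (hg : LP d g) :
    LP d (f ∘ g) :=
  ⟨fun w => (hf.1 (g w)).trans (hg.1 w), fun v w h => hf.2 _ _ (hg.2 _ _ h)⟩

/-- The automorphism group of the rooted `d`-regular tree, realized as the subgroup of
permutations of the vertex set which fix the root and preserve the child relation
(equivalently: length- and prefix-preserving permutations). -/
def treeAut (d : ℕ) : Subgroup (Equiv.Perm (Vertex d)) where
  carrier := {g | LP d ⇑g ∧ LP d ⇑g⁻¹}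
  one_mem' := ⟨LP.id' d, by simpa using LP.id' d⟩
  mul_mem' := by
    rintro a b ⟨ha1, ha2⟩ ⟨hb1, hb2⟩
    refine ⟨?_, ?_⟩
    · simpa [Equiv.Perm.coe_mul] using ha1.comp hb1
    · rw [mul_inv_rev]
      simpa [Equiv.Perm.coe_mul] using hb2.comp ha2
  inv_mem' := by
    rintro a ⟨h1, h2⟩
    exact ⟨h2, by simpa using h1⟩

/-- `Aut T_d`, the automorphism group of the `d`-regular rooted tree. -/
abbrev AutT (d : ℕ) := ↥(treeAut d)

namespace AutT

variable {d : ℕ}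

/-- The underlying permutation of the vertices. -/
def toPerm (g : AutT d) : Equiv.Perm (Vertex d) := g.1

theorem toPerm_mul (g h : AutT d) : (g * h).toPerm = g.toPerm * h.toPerm := rfl

theorem toPerm_inv (g : AutT d) : (g⁻¹).toPerm = (g.toPerm)⁻¹ := rfl

theorem toPerm_one : (1 : AutT d).toPerm = 1 := rfl

theorem length_apply (g : AutT d) (w : Vertex d) : (g.toPerm w).length = w.length :=
  g.2.1.1 w

theorem prefix_apply (g : AutT d) {v w : Vertex d} (h : v <+: w) :
    g.toPerm v <+: g.toPerm w :=
  g.2.1.2 v w h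

theorem take_apply (g : AutT d) (v u : Vertex d) :
    (g.toPerm (v ++ u)).take v.length = g.toPerm v := by
  have h : g.toPerm v <+: g.toPerm (v ++ u) := g.prefix_apply (List.prefix_append v u)
  have h2 := List.prefix_iff_eq_take.mp h
  rw [length_apply] at h2
  exact h2.symm

theorem apply_append (g : AutT d) (v u : Vertex d) :
    g.toPerm (v ++ u) = g.toPerm v ++ (g.toPerm (v ++ u)).drop v.length := by
  conv_lhs => rw [← List.take_append_drop v.length (g.toPerm (v ++ u))]
  rw [take_apply]

/-- The section function: the action of `g` on the subtree over `v`, transported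
to the whole tree. -/
def secFun (g : AutT d) (v : Vertex d) : Vertex d → Vertex d :=
  fun u => (g.toPerm (v ++ u)).drop v.length

theorem secFun_spec (g : AutT d) (v u : Vertex d) :
    g.toPerm (v ++ u) = g.toPerm v ++ secFun g v u :=
  apply_append g v u

theorem secFun_left (g : AutT d) (v u : Vertex d) :
    secFun g⁻¹ (g.toPerm v) (secFun g v u) = u := by
  have h1 := secFun_spec g⁻¹ (g.toPerm v) (secFun g v u)
  rw [← secFun_spec g v u] at h1
  rw [toPerm_inv] at h1
  simp only [Equiv.Perm.inv_def, Equiv.symm_apply_apply] at h1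
  exact (List.append_cancel_left h1).symm

theorem LP_secFun (g : AutT d) (v : Vertex d) : LP d (secFun g v) := by
  constructor
  · intro w
    simp only [secFun, List.length_drop, length_apply, List.length_append]
    omega
  · intro u1 u2 h
    have h2 : g.toPerm (v ++ u1) <+: g.toPerm (v ++ u2) := by
      refine g.prefix_apply ?_
      obtain ⟨t, ht⟩ := h
      exact ⟨t, by rw [List.append_assoc, ht]⟩
    exact h2.drop v.length

/-- The section of the tree automorphism `g` at the vertex `v`: the automorphism `g|_v` with
`g (v ++ u) = g v ++ g|_v u`. -/
def sec (g : AutT d) (v : Vertex d) : AutT d :=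
  ⟨{ toFun := secFun g v
     invFun := secFun g⁻¹ (g.toPerm v)
     left_inv := secFun_left g v
     right_inv := by
       intro u
       have h := secFun_left g⁻¹ (g.toPerm v) u
       rw [inv_inv] at h
       rw [toPerm_inv] at h
       simp only [Equiv.Perm.inv_def, Equiv.symm_apply_apply] at h
       exact h },
   by
     refine ⟨LP_secFun g v, ?_⟩
     have : ⇑(({ toFun := secFun g v
                 invFun := secFun g⁻¹ (g.toPerm v)
                 left_inv := secFun_left g v
                 right_inv := by
                   intro u
                   have h := secFun_left g⁻¹ (g.toPerm v) u
                   rw [inv_inv] at h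
                   rw [toPerm_inv] at h
                   simp only [Equiv.Perm.inv_def, Equiv.symm_apply_apply] at h
                   exact h } : Equiv.Perm (Vertex d))⁻¹) = secFun g⁻¹ (g.toPerm v) := rfl
     rw [this]
     exact LP_secFun g⁻¹ (g.toPerm v)⟩

theorem sec_apply (g : AutT d) (v u : Vertex d) :
    (sec g v).toPerm u = (g.toPerm (v ++ u)).drop v.length := rfl

end AutT

open AutT

/-- The stabilizer of the vertex `v` in `Aut T_d`. -/
def stabT (d : ℕ) (v : Vertex d) : Subgroup (AutT d) where
  carrier := {g | g.toPerm v = v}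
  one_mem' := rfl
  mul_mem' := by
    intro a b ha hb
    show (a * b).toPerm v = v
    rw [toPerm_mul, Equiv.Perm.mul_apply]
    rw [show b.toPerm v = v from hb, show a.toPerm v = v from ha]
  inv_mem' := by
    intro a ha
    show (a⁻¹).toPerm v = v
    rw [toPerm_inv]
    rw [Equiv.Perm.inv_eq_iff_eq]
    exact (show a.toPerm v = v from ha).symm

/-- The self-similarity homomorphism `π_v` from the stabilizer of `v` to `Aut T_d`,
`g ↦ g|_v`. -/
def secHom (d : ℕ) (v : Vertex d) : (stabT d v) →* AutT d where
  toFun g := sec g.1 v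
  map_one' := by
    apply Subtype.ext
    apply Equiv.ext
    intro u
    show ((1 : AutT d).toPerm (v ++ u)).drop v.length = (1 : AutT d).toPerm u
    rw [toPerm_one]
    simp [List.drop_left]
  map_mul' := by
    intro a b
    apply Subtype.ext
    apply Equiv.ext
    intro u
    have hb : (b.1).toPerm v = v := b.2
    show ((a.1 * b.1).toPerm (v ++ u)).drop v.length
        = (sec a.1 v).toPerm ((sec b.1 v).toPerm u)
    rw [toPerm_mul, Equiv.Perm.mul_apply]
    congr 1
    congr 1
    have h := secFun_spec b.1 v u
    rw [hb] at h
    exact h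

/-- The image subgroup `H^v = π_v(H_v)` of the stabilizer of `v` in `H` under the
self-similarity map. -/
def secSG (d : ℕ) (H : Subgroup (AutT d)) (v : Vertex d) : Subgroup (AutT d) :=
  (H.subgroupOf (stabT d v)).map (secHom d v)

/-- A subgroup of `Aut T_d` is self-similar if `H^v ≤ H` for every vertex `v`. -/
def IsSelfSimilar (d : ℕ) (H : Subgroup (AutT d)) : Prop :=
  ∀ v : Vertex d, secSG d H v ≤ H

/-- A subgroup of `Aut T_d` is fractal if `H^v = H` for every vertex `v`. -/
def IsFractal (d : ℕ) (H : Subgroup (AutT d)) : Prop :=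
  ∀ v : Vertex d, secSG d H v = H

end TreeDyn
namespace TreeDyn

open AutT

variable {d : ℕ}

instance : TopologicalSpace (Vertex d) := ⊥
instance : DiscreteTopology (Vertex d) := ⟨rfl⟩

/-- The profinite topology on `Aut T_d`: the topology of pointwise convergence on vertices. -/
instance : TopologicalSpace (AutT d) :=
  TopologicalSpace.induced (fun g : AutT d => (g.toPerm : Vertex d → Vertex d)) inferInstance

theorem continuous_toFun : Continuous fun g : AutT d => (g.toPerm : Vertex d → Vertex d) :=
  continuous_induced_dom

theorem continuous_ev (x : Vertex d) : Continuous fun g : AutT d => g.toPerm x :=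
  (continuous_apply x).comp continuous_toFun

instance : IsTopologicalGroup (AutT d) where
  continuous_mul := by
    apply continuous_induced_rng.2
    show Continuous fun p : AutT d × AutT d => ((p.1 * p.2).toPerm : Vertex d → Vertex d)
    apply continuous_pi
    intro x
    rw [continuous_discrete_rng]
    intro z
    have heq : ((fun p : AutT d × AutT d => (p.1 * p.2).toPerm x)) ⁻¹' {z}
        = ⋃ y : Vertex d, ((fun p : AutT d × AutT d => p.2.toPerm x) ⁻¹' {y})
            ∩ ((fun p : AutT d × AutT d => p.1.toPerm y) ⁻¹' {z}) := by
      ext p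
      simp only [Set.mem_preimage, Set.mem_singleton_iff, Set.mem_iUnion, Set.mem_inter_iff]
      constructor
      · intro h
        exact ⟨p.2.toPerm x, rfl, by rw [toPerm_mul, Equiv.Perm.mul_apply] at h; exact h⟩
      · rintro ⟨y, h1, h2⟩
        rw [toPerm_mul, Equiv.Perm.mul_apply, h1, h2]
    rw [heq]
    apply isOpen_iUnion
    intro y
    exact ((isOpen_discrete _).preimage ((continuous_ev x).comp continuous_snd)).inter
      ((isOpen_discrete _).preimage ((continuous_ev y).comp continuous_fst))
  continuous_inv := by
    apply continuous_induced_rng.2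
    show Continuous fun g : AutT d => ((g⁻¹).toPerm : Vertex d → Vertex d)
    apply continuous_pi
    intro x
    rw [continuous_discrete_rng]
    intro z
    have heq : (fun g : AutT d => (g⁻¹).toPerm x) ⁻¹' {z}
        = (fun g : AutT d => g.toPerm z) ⁻¹' {x} := by
      ext g
      simp only [Set.mem_preimage, Set.mem_singleton_iff]
      rw [toPerm_inv]
      exact Equiv.Perm.inv_eq_iff_eq.trans eq_comm
    rw [heq]
    exact (isOpen_discrete _).preimage (continuous_ev z)

end TreeDyn
namespace TreeDyn

open AutT

/-- `J` is the self-similar closure of `H` in `G`: the smallest closed self-similar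
subgroup of `G` containing `H`. -/
def IsSelfSimilarClosure (d : ℕ) (G H J : Subgroup (AutT d)) : Prop :=
  H ≤ J ∧ J ≤ G ∧ IsClosed (J : Set (AutT d)) ∧ IsSelfSimilar d J ∧
    ∀ J' : Subgroup (AutT d), H ≤ J' → J' ≤ G → IsClosed (J' : Set (AutT d)) →
      IsSelfSimilar d J' → J ≤ J'

/-- The pointwise stabilizer in `Aut T_d` of the vertices at level `m`. -/
def levelStab (d : ℕ) (m : ℕ) : Subgroup (AutT d) where
  carrier := {g | ∀ v : Vertex d, v.length = m → g.toPerm v = v}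
  one_mem' := fun _ _ => rfl
  mul_mem' := by
    intro a b ha hb v hv
    show (a * b).toPerm v = v
    rw [toPerm_mul, Equiv.Perm.mul_apply, hb v hv, ha v hv]
  inv_mem' := by
    intro a ha v hv
    show (a⁻¹).toPerm v = v
    rw [toPerm_inv, Equiv.Perm.inv_eq_iff_eq]
    exact (ha v hv).symm

/-- A topological group is pronilpotent if its quotient by every open normal subgroup
is nilpotent. -/
def Pronilpotent (G : Type*) [Group G] [TopologicalSpace G] : Prop :=
  ∀ (N : Subgroup G) [N.Normal], IsOpen (N : Set G) → Group.IsNilpotent (G ⧸ N)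

/-- A topological group is pro-`p` if its quotient by every open normal subgroup
is a `p`-group. -/
def IsProP (p : ℕ) (G : Type*) [Group G] [TopologicalSpace G] : Prop :=
  ∀ (N : Subgroup G) [N.Normal], IsOpen (N : Set G) → IsPGroup p (G ⧸ N)

/-- A topological group is prosolvable if its quotient by every open normal subgroup
is solvable. -/
def Prosolvable (G : Type*) [Group G] [TopologicalSpace G] : Prop :=
  ∀ (N : Subgroup G) [N.Normal], IsOpen (N : Set G) → IsSolvable (G ⧸ N)

/-- The Frattini subgroup of a topological group: the intersection of its
maximal open (proper) subgroups. -/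
def frattiniOpen (G : Type*) [Group G] [TopologicalSpace G] : Subgroup G :=
  sInf {M : Subgroup G | IsOpen (M : Set G) ∧ M ≠ ⊤ ∧
    ∀ M' : Subgroup G, IsOpen (M' : Set G) → M < M' → M' = ⊤}

end TreeDyn
namespace TreeDyn

open AutT

variable {d : ℕ}

/-- The cyclic successor on `Fin d`. -/
def succFin (x : Fin d) : Fin d :=
  ⟨(x.1 + 1) % d, Nat.mod_lt _ (Nat.lt_of_le_of_lt (Nat.zero_le _) x.2)⟩

/-- The cyclic predecessor on `Fin d`. -/
def predFin (x : Fin d) : Fin d :=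
  ⟨(x.1 + (d - 1)) % d, Nat.mod_lt _ (Nat.lt_of_le_of_lt (Nat.zero_le _) x.2)⟩

theorem predFin_succFin (x : Fin d) : predFin (succFin x) = x := by
  have hd : 0 < d := Nat.lt_of_le_of_lt (Nat.zero_le _) x.2
  apply Fin.ext
  show ((x.1 + 1) % d + (d - 1)) % d = x.1
  rw [Nat.mod_add_mod, show x.1 + 1 + (d - 1) = x.1 + d by omega, Nat.add_mod_right,
    Nat.mod_eq_of_lt x.2]

theorem succFin_predFin (x : Fin d) : succFin (predFin x) = x := by
  have hd : 0 < d := Nat.lt_of_le_of_lt (Nat.zero_le _) x.2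
  apply Fin.ext
  show ((x.1 + (d - 1)) % d + 1) % d = x.1
  rw [Nat.mod_add_mod, show x.1 + (d - 1) + 1 = x.1 + d by omega, Nat.add_mod_right,
    Nat.mod_eq_of_lt x.2]

theorem succFin_val_eq_zero_iff (x : Fin d) : (succFin x).1 = 0 ↔ x.1 + 1 = d := by
  show (x.1 + 1) % d = 0 ↔ x.1 + 1 = d
  by_cases h : x.1 + 1 = d
  · simp [h, Nat.mod_self]
  · rw [Nat.mod_eq_of_lt (by omega)]
    omega

theorem predFin_val_succ_eq_iff (x : Fin d) : (predFin x).1 + 1 = d ↔ x.1 = 0 := by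
  have hd : 0 < d := Nat.lt_of_le_of_lt (Nat.zero_le _) x.2
  show (x.1 + (d - 1)) % d + 1 = d ↔ x.1 = 0
  rcases Nat.eq_zero_or_pos x.1 with h | h
  · rw [h]
    simp only [Nat.zero_add]
    rw [Nat.mod_eq_of_lt (show d - 1 < d by omega)]
    simp only [iff_true, eq_self_iff_true]
    omega
  · rw [show x.1 + (d - 1) = (x.1 - 1) + d by omega, Nat.add_mod_right,
      Nat.mod_eq_of_lt (show x.1 - 1 < d by omega)]
    omega

/-- The odometer function: adds one with carrying, on words read root-first. -/
def odF (d : ℕ) : Vertex d → Vertex d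
  | [] => []
  | x :: u => succFin x :: (if x.1 + 1 = d then odF d u else u)

/-- The inverse odometer function. -/
def odG (d : ℕ) : Vertex d → Vertex d
  | [] => []
  | x :: u => predFin x :: (if x.1 = 0 then odG d u else u)

theorem odG_odF (u : Vertex d) : odG d (odF d u) = u := by
  induction u with
  | nil => rfl
  | cons x t ih =>
    simp only [odF, odG, predFin_succFin]
    by_cases h : x.1 + 1 = d
    · rw [if_pos h, if_pos ((succFin_val_eq_zero_iff x).mpr h), ih]
    · rw [if_neg h, if_neg (fun hc => h ((succFin_val_eq_zero_iff x).mp hc))]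

theorem odF_odG (u : Vertex d) : odF d (odG d u) = u := by
  induction u with
  | nil => rfl
  | cons x t ih =>
    simp only [odF, odG, succFin_predFin]
    by_cases h : x.1 = 0
    · rw [if_pos h, if_pos ((predFin_val_succ_eq_iff x).mpr h), ih]
    · rw [if_neg h, if_neg (fun hc => h ((predFin_val_succ_eq_iff x).mp hc))]

theorem odF_append (a b : Vertex d) :
    odF d (a ++ b) = odF d a ++ (if ∀ x ∈ a, x.1 + 1 = d then odF d b else b) := by
  induction a with
  | nil => simp [odF]
  | cons x t ih =>
    by_cases h : x.1 + 1 = d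
    · by_cases h2 : ∀ y ∈ t, y.1 + 1 = d
      · have hall : ∀ y ∈ x :: t, y.1 + 1 = d := by
          intro y hy
          rcases List.mem_cons.mp hy with rfl | hy
          · exact h
          · exact h2 y hy
        simp only [List.cons_append, List.append_eq, odF, if_pos h, if_pos h2, if_pos hall, ih]
      · have hall : ¬ ∀ y ∈ x :: t, y.1 + 1 = d :=
          fun hc => h2 fun y hy => hc y (List.mem_cons_of_mem x hy)
        simp only [List.cons_append, List.append_eq, odF, if_pos h, if_neg h2, if_neg hall, ih]
    · have hall : ¬ ∀ y ∈ x :: t, y.1 + 1 = d :=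
        fun hc => h (hc x List.mem_cons_self)
      simp only [List.cons_append, List.append_eq, odF, if_neg h, if_neg hall]

theorem odG_append (a b : Vertex d) :
    odG d (a ++ b) = odG d a ++ (if ∀ x ∈ a, x.1 = 0 then odG d b else b) := by
  induction a with
  | nil => simp [odG]
  | cons x t ih =>
    by_cases h : x.1 = 0
    · by_cases h2 : ∀ y ∈ t, y.1 = 0
      · have hall : ∀ y ∈ x :: t, y.1 = 0 := by
          intro y hy
          rcases List.mem_cons.mp hy with rfl | hy
          · exact h
          · exact h2 y hy
        simp only [List.cons_append, List.append_eq, odG, if_pos h, if_pos h2, if_pos hall, ih]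
      · have hall : ¬ ∀ y ∈ x :: t, y.1 = 0 :=
          fun hc => h2 fun y hy => hc y (List.mem_cons_of_mem x hy)
        simp only [List.cons_append, List.append_eq, odG, if_pos h, if_neg h2, if_neg hall, ih]
    · have hall : ¬ ∀ y ∈ x :: t, y.1 = 0 :=
        fun hc => h (hc x List.mem_cons_self)
      simp only [List.cons_append, List.append_eq, odG, if_neg h, if_neg hall]

theorem LP_odF : LP d (odF d) := by
  constructor
  · intro w
    induction w with
    | nil => rfl
    | cons x t ih =>
      simp only [odF]
      by_cases h : x.1 + 1 = d <;> simp [h, ih]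
  · intro v w h
    obtain ⟨t, rfl⟩ := h
    rw [odF_append]
    exact ⟨_, rfl⟩

theorem LP_odG : LP d (odG d) := by
  constructor
  · intro w
    induction w with
    | nil => rfl
    | cons x t ih =>
      simp only [odG]
      by_cases h : x.1 = 0 <;> simp [h, ih]
  · intro v w h
    obtain ⟨t, rfl⟩ := h
    rw [odG_append]
    exact ⟨_, rfl⟩

/-- The standard odometer as a permutation of the vertices. -/
def odPerm (d : ℕ) : Equiv.Perm (Vertex d) where
  toFun := odF d
  invFun := odG d
  left_inv := odG_odF
  right_inv := odF_odG

/-- The standard odometer `ω ∈ Aut T_d` (adds one to a `d`-adic digit string,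
with carrying). -/
def od (d : ℕ) : AutT d :=
  ⟨odPerm d, ⟨LP_odF, LP_odG⟩⟩

/-- The standard `d`-cycle `σ = (0 1 … d-1)` on the first level. -/
def sigmaFin (d : ℕ) : Equiv.Perm (Fin d) where
  toFun := succFin
  invFun := predFin
  left_inv := predFin_succFin
  right_inv := succFin_predFin

end TreeDyn

/-! ### Auxiliary material for the main theorem -/

namespace TreeDyn

open AutT

section Aux

variable {d : ℕ}

/-- The level-`m` vertices. -/
abbrev LevelV (d m : ℕ) := {w : Vertex d // w.length = m}

instance levelFinite (d m : ℕ) : Finite (LevelV d m) := by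
  refine Finite.of_injective
    (fun w => (fun i : Fin m => w.1.get (Fin.cast w.2.symm i))) ?_
  rintro ⟨w1, h1⟩ ⟨w2, h2⟩ h
  apply Subtype.ext
  apply List.ext_get (h1.trans h2.symm)
  intro n hn1 hn2
  have := congrFun h ⟨n, by omega⟩
  simpa using this

/-- The action of a tree automorphism on the level-`m` vertices. -/
def levelHom (d m : ℕ) : AutT d →* Equiv.Perm (LevelV d m) where
  toFun g := g.toPerm.subtypePerm (fun w => by rw [length_apply])
  map_one' := by ext w; rfl
  map_mul' a b := by ext w; rfl

theorem levelHom_eq_one_iff {m : ℕ} {g : AutT d} :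
    levelHom d m g = 1 ↔ g ∈ levelStab d m := by
  constructor
  · intro h v hv
    have := Equiv.ext_iff.mp h ⟨v, hv⟩
    exact Subtype.ext_iff.mp this
  · intro h
    apply Equiv.ext
    intro w
    exact Subtype.ext (h w.1 w.2)

theorem levelHom_toPerm_eq {m : ℕ} {g g' : AutT d}
    (h : levelHom d m g = levelHom d m g') {v : Vertex d} (hv : v.length = m) :
    g.toPerm v = g'.toPerm v :=
  Subtype.ext_iff.mp (Equiv.ext_iff.mp h ⟨v, hv⟩)

theorem isOpen_ev_eq (v w : Vertex d) : IsOpen {g : AutT d | g.toPerm v = w} := by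
  have : {g : AutT d | g.toPerm v = w} = (fun g : AutT d => g.toPerm v) ⁻¹' {w} := rfl
  rw [this]
  exact (isOpen_discrete _).preimage (continuous_ev v)

theorem isOpen_stabT (v : Vertex d) : IsOpen ((stabT d v : Subgroup (AutT d)) : Set (AutT d)) :=
  isOpen_ev_eq v v

theorem isOpen_levelStab (m : ℕ) :
    IsOpen ((levelStab d m : Subgroup (AutT d)) : Set (AutT d)) := by
  have : ((levelStab d m : Subgroup (AutT d)) : Set (AutT d)) =
      ⋂ w : LevelV d m, {g : AutT d | g.toPerm w.1 = w.1} := by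
    ext g
    simp only [Set.mem_iInter, Set.mem_setOf_eq, SetLike.mem_coe]
    exact ⟨fun h w => h w.1 w.2, fun h v hv => h ⟨v, hv⟩⟩
  rw [this]
  exact isOpen_iInter_of_finite fun w => isOpen_ev_eq _ _

theorem mem_levelStab_of_le (hd : 0 < d) {g : AutT d} {m : ℕ}
    (hg : g ∈ levelStab d m) {v : Vertex d} (hv : v.length ≤ m) : g.toPerm v = v := by
  have hw : (v ++ List.replicate (m - v.length) (⟨0, hd⟩ : Fin d)).length = m := by
    simp; omega
  have h1 : g.toPerm (v ++ List.replicate (m - v.length) (⟨0, hd⟩ : Fin d)) = _ := hg _ hw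
  have h2 := take_apply g v (List.replicate (m - v.length) (⟨0, hd⟩ : Fin d))
  rw [h1] at h2
  rw [← h2, List.take_left]

theorem exists_levelStab_subset (hd : 0 < d) {U : Set (AutT d)} (hU : IsOpen U)
    (h1 : (1 : AutT d) ∈ U) : ∃ m, ((levelStab d m : Subgroup (AutT d)) : Set (AutT d)) ⊆ U := by
  rw [isOpen_induced_iff] at hU
  obtain ⟨t, ht, rfl⟩ := hU
  have h1' : (fun v : Vertex d => v) ∈ t := h1
  obtain ⟨I, u, hu, hsub⟩ := (isOpen_pi_iff.mp ht) _ h1'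
  refine ⟨I.sup List.length, fun g hg => ?_⟩
  apply hsub
  rw [Set.mem_pi]
  intro v hv
  have : g.toPerm v = v :=
    mem_levelStab_of_le hd hg (Finset.le_sup (Finset.mem_coe.mp hv))
  show g.toPerm v ∈ u v
  rw [this]
  exact (hu v (Finset.mem_coe.mp hv)).2

theorem exists_levelStab_subtype (hd : 0 < d) {K : Subgroup (AutT d)} {M : Set ↥K}
    (hM : IsOpen M) (h1 : (1 : ↥K) ∈ M) :
    ∃ m, ∀ x : ↥K, (x : AutT d) ∈ levelStab d m → x ∈ M := by
  rw [isOpen_induced_iff] at hM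
  obtain ⟨U, hU, rfl⟩ := hM
  obtain ⟨m, hm⟩ := exists_levelStab_subset hd hU h1
  exact ⟨m, fun x hx => hm hx⟩

theorem continuous_sec (v : Vertex d) : Continuous fun g : AutT d => sec g v := by
  apply continuous_induced_rng.2
  show Continuous fun g : AutT d => ((sec g v).toPerm : Vertex d → Vertex d)
  apply continuous_pi
  intro u
  show Continuous fun g : AutT d => (g.toPerm (v ++ u)).drop v.length
  exact Continuous.comp continuous_of_discreteTopology (continuous_ev (v ++ u))

theorem continuous_conj (g : AutT d) : Continuous fun x : AutT d => g * x * g⁻¹ :=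
  (continuous_const.mul continuous_id).mul continuous_const

theorem sec_mul {a b : AutT d} {v : Vertex d} (ha : a ∈ stabT d v) (hb : b ∈ stabT d v) :
    sec (a * b) v = sec a v * sec b v :=
  (secHom d v).map_mul ⟨a, ha⟩ ⟨b, hb⟩

theorem sec_inv {a : AutT d} {v : Vertex d} (ha : a ∈ stabT d v) :
    sec a⁻¹ v = (sec a v)⁻¹ :=
  map_inv (secHom d v) ⟨a, ha⟩

theorem sec_mem_secSG {K : Subgroup (AutT d)} {g : AutT d} {v : Vertex d}
    (hg : g ∈ K) (hs : g ∈ stabT d v) : sec g v ∈ secSG d K v :=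
  Subgroup.mem_map.mpr ⟨⟨g, hs⟩, Subgroup.mem_subgroupOf.mpr hg, rfl⟩

theorem secSG_elim {K : Subgroup (AutT d)} {v : Vertex d} {x : AutT d}
    (h : x ∈ secSG d K v) : ∃ g, g ∈ K ∧ g ∈ stabT d v ∧ sec g v = x := by
  obtain ⟨y, hy, rfl⟩ := Subgroup.mem_map.mp h
  exact ⟨y.1, Subgroup.mem_subgroupOf.mp hy, y.2, rfl⟩

theorem secSG_mono {K L : Subgroup (AutT d)} (h : K ≤ L) (v : Vertex d) :
    secSG d K v ≤ secSG d L v := by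
  intro x hx
  obtain ⟨g, hg, hs, rfl⟩ := secSG_elim hx
  exact sec_mem_secSG (h hg) hs

theorem IsFractal.sec_mem {G : Subgroup (AutT d)} (hG : IsFractal d G) {g : AutT d}
    {v : Vertex d} (hg : g ∈ G) (hs : g ∈ stabT d v) : sec g v ∈ G := by
  have := sec_mem_secSG hg hs
  rwa [hG v] at this

theorem IsFractal.surj {G : Subgroup (AutT d)} (hG : IsFractal d G) {v : Vertex d}
    {x : AutT d} (hx : x ∈ G) : ∃ k, k ∈ G ∧ k ∈ stabT d v ∧ sec k v = x := by
  rw [← hG v] at hx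
  exact secSG_elim hx

/-- Unbundled: `K` is invariant under conjugation by elements of `G`. -/
def IsConjInv (G K : Subgroup (AutT d)) : Prop := ∀ g ∈ G, ∀ x ∈ K, g * x * g⁻¹ ∈ K

theorem IsConjInv.secSG {G K : Subgroup (AutT d)} (hG : IsFractal d G)
    (hK : IsConjInv G K) (v : Vertex d) : IsConjInv G (secSG d K v) := by
  intro g hg x hx
  obtain ⟨h, hhK, hhs, rfl⟩ := secSG_elim hx
  obtain ⟨k, hkG, hks, hkv⟩ := hG.surj (v := v) hg
  have h1 : k * h * k⁻¹ ∈ K := hK k hkG h hhK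
  have h2 : k * h ∈ stabT d v := mul_mem hks hhs
  have h3 := sec_mem_secSG h1 (mul_mem h2 (inv_mem hks))
  rwa [sec_mul h2 (inv_mem hks), sec_mul hks hhs, sec_inv hks, hkv] at h3

theorem IsConjInv.closure {G K : Subgroup (AutT d)} (hK : IsConjInv G K) :
    IsConjInv G K.topologicalClosure := by
  intro g hg x hx
  have hx' : x ∈ _root_.closure (K : Set (AutT d)) := hx
  have himg : (fun y : AutT d => g * y * g⁻¹) '' _root_.closure ↑K ⊆
      _root_.closure ((fun y : AutT d => g * y * g⁻¹) '' ↑K) :=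
    image_closure_subset_closure_image (continuous_conj g)
  have h2 : g * x * g⁻¹ ∈ _root_.closure ((fun y : AutT d => g * y * g⁻¹) '' ↑K) :=
    himg ⟨x, hx', rfl⟩
  have hsub : ((fun y : AutT d => g * y * g⁻¹) '' ↑K) ⊆ (K : Set (AutT d)) := by
    rintro _ ⟨y, hy, rfl⟩
    exact hK g hg y hy
  show g * x * g⁻¹ ∈ _root_.closure (K : Set (AutT d))
  exact closure_mono hsub h2

theorem IsConjInv.sup {G A B : Subgroup (AutT d)} (hA : IsConjInv G A)
    (hB : IsConjInv G B) : IsConjInv G (A ⊔ B) := by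
  intro g hg
  let W : Subgroup (AutT d) :=
    { carrier := {x | g * x * g⁻¹ ∈ A ⊔ B}
      one_mem' := by simpa using one_mem (A ⊔ B)
      mul_mem' := by
        intro a b ha hb
        have h : g * (a * b) * g⁻¹ = (g * a * g⁻¹) * (g * b * g⁻¹) := by group
        show g * (a * b) * g⁻¹ ∈ A ⊔ B
        rw [h]
        exact mul_mem ha hb
      inv_mem' := by
        intro a ha
        have h : g * a⁻¹ * g⁻¹ = (g * a * g⁻¹)⁻¹ := by group
        show g * a⁻¹ * g⁻¹ ∈ A ⊔ B
        rw [h]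
        exact inv_mem ha }
  have hle : A ⊔ B ≤ W := by
    apply sup_le
    · intro x hx
      exact (le_sup_left : A ≤ A ⊔ B) (hA g hg x hx)
    · intro x hx
      exact (le_sup_right : B ≤ A ⊔ B) (hB g hg x hx)
  intro x hx
  exact hle hx

end Aux

section FiniteGroupTheory

variable {X : Type*} [Group X]

theorem nilpotent_of_le {A B : Subgroup X} (h : A ≤ B)
    (hB : Group.IsNilpotent ↥B) : Group.IsNilpotent ↥A := by
  haveI := hB
  haveI : Group.IsNilpotent ↥(A.subgroupOf B) := Subgroup.isNilpotent _
  exact nilpotent_of_mulEquiv (Subgroup.subgroupOfEquivOfLe h)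

theorem mem_sup_of_conj {A B : Subgroup X}
    (hnorm : ∀ b ∈ B, ∀ a ∈ A, b * a * b⁻¹ ∈ A) {x : X} (hx : x ∈ A ⊔ B) :
    ∃ a ∈ A, ∃ b ∈ B, x = a * b := by
  let W : Subgroup X :=
    { carrier := {x | ∃ a ∈ A, ∃ b ∈ B, x = a * b}
      one_mem' := ⟨1, one_mem A, 1, one_mem B, by group⟩
      mul_mem' := by
        rintro x y ⟨a1, ha1, b1, hb1, rfl⟩ ⟨a2, ha2, b2, hb2, rfl⟩
        refine ⟨a1 * (b1 * a2 * b1⁻¹), mul_mem ha1 (hnorm b1 hb1 a2 ha2),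
          b1 * b2, mul_mem hb1 hb2, by group⟩
      inv_mem' := by
        rintro x ⟨a, ha, b, hb, rfl⟩
        have h1 : b⁻¹ * a⁻¹ * (b⁻¹)⁻¹ ∈ A := hnorm b⁻¹ (inv_mem hb) a⁻¹ (inv_mem ha)
        refine ⟨b⁻¹ * a⁻¹ * (b⁻¹)⁻¹, h1, b⁻¹, inv_mem hb, by group⟩ }
  have hle : A ⊔ B ≤ W := by
    apply sup_le
    · intro a ha
      exact ⟨a, ha, 1, one_mem B, by group⟩
    · intro b hb
      exact ⟨1, one_mem A, b, hb, by group⟩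
  exact hle hx

theorem normal_sup' {A B : Subgroup X} (hA : A.Normal) (hB : B.Normal) :
    (A ⊔ B).Normal := by
  constructor
  intro x hx g
  obtain ⟨a, ha, b, hb, rfl⟩ :=
    mem_sup_of_conj (fun b hb a ha => hA.conj_mem a ha b) hx
  have h : g * (a * b) * g⁻¹ = (g * a * g⁻¹) * (g * b * g⁻¹) := by group
  rw [h]
  exact mul_mem ((le_sup_left : A ≤ A ⊔ B) (hA.conj_mem a ha g))
    ((le_sup_right : B ≤ A ⊔ B) (hB.conj_mem b hb g))

theorem card_sup_dvd [Finite X] {A B : Subgroup X} (hA : A.Normal) :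
    Nat.card ↥(A ⊔ B) ∣ Nat.card ↥A * Nat.card ↥B := by
  haveI := hA
  rw [sup_comm]
  have h1 : Nat.card ↥(B ⊔ A) =
      Nat.card (↥(B ⊔ A) ⧸ (A.subgroupOf (B ⊔ A))) * Nat.card ↥(A.subgroupOf (B ⊔ A)) :=
    Subgroup.card_eq_card_quotient_mul_card_subgroup _
  have h2 : Nat.card ↥(A.subgroupOf (B ⊔ A)) = Nat.card ↥A :=
    Nat.card_congr (Subgroup.subgroupOfEquivOfLe le_sup_right).toEquiv
  have h3 : Nat.card (↥(B ⊔ A) ⧸ (A.subgroupOf (B ⊔ A))) =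
      Nat.card (↥B ⧸ (A.subgroupOf B)) :=
    Nat.card_congr (QuotientGroup.quotientInfEquivProdNormalQuotient B A).toEquiv.symm
  obtain ⟨c, hc⟩ : Nat.card (↥B ⧸ (A.subgroupOf B)) ∣ Nat.card ↥B :=
    ⟨Nat.card ↥(A.subgroupOf B), Subgroup.card_eq_card_quotient_mul_card_subgroup _⟩
  exact ⟨c, by rw [h1, h2, h3, hc]; ring⟩

theorem fitting_top [Finite X] {A B : Subgroup X} (hAn : A.Normal) (hBn : B.Normal)
    (hA : Group.IsNilpotent ↥A) (hB : Group.IsNilpotent ↥B) (hsup : A ⊔ B = ⊤) :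
    Group.IsNilpotent X := by
  haveI := hAn; haveI := hBn
  refine ((isNilpotent_of_finite_tfae (G := X)).out 3 0).mp ?_
  intro p hp P
  haveI := hp
  -- the unique Sylow p-subgroups of A and B
  obtain ⟨QA⟩ : Nonempty (Sylow p ↥A) := inferInstance
  obtain ⟨QB⟩ : Nonempty (Sylow p ↥B) := inferInstance
  have tfaeA := (isNilpotent_of_finite_tfae (G := ↥A)).out 0 3
  have tfaeB := (isNilpotent_of_finite_tfae (G := ↥B)).out 0 3
  have hQA : (QA : Subgroup ↥A).Normal := tfaeA.mp hA p hp QA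
  have hQB : (QB : Subgroup ↥B).Normal := tfaeB.mp hB p hp QB
  haveI := hQA; haveI := hQB
  haveI : ((QA : Subgroup ↥A)).Characteristic := QA.characteristic_of_normal hQA
  haveI : ((QB : Subgroup ↥B)).Characteristic := QB.characteristic_of_normal hQB
  have hSAn : ((QA : Subgroup ↥A).map A.subtype).Normal := inferInstance
  have hSBn : ((QB : Subgroup ↥B).map B.subtype).Normal := inferInstance
  have hSAp : IsPGroup p ↥((QA : Subgroup ↥A).map A.subtype) := QA.2.map A.subtype
  have hSBp : IsPGroup p ↥((QB : Subgroup ↥B).map B.subtype) := QB.2.map B.subtype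
  set SA : Subgroup X := (QA : Subgroup ↥A).map A.subtype
  set SB : Subgroup X := (QB : Subgroup ↥B).map B.subtype
  set S : Subgroup X := SA ⊔ SB with hSdef
  haveI hSn : S.Normal := normal_sup' hSAn hSBn
  have hSp : IsPGroup p ↥S := by
    haveI := hSBn
    exact IsPGroup.to_sup_of_normal_right hSAp hSBp
  -- p does not divide the index of S
  have hidx : ¬ p ∣ S.index := by
    set q := QuotientGroup.mk' S
    have hcardA : ¬ p ∣ Nat.card ↥(A.map q) := by
      set f := q.comp A.subtype with hf
      have hrange : A.map q = f.range := by
        rw [hf, MonoidHom.range_comp, Subgroup.range_subtype]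
      have hcard : Nat.card ↥f.range = f.ker.index := (Subgroup.index_ker f).symm
      have hle : (QA : Subgroup ↥A) ≤ f.ker := by
        intro x hx
        rw [MonoidHom.mem_ker]
        show q (A.subtype x) = 1
        rw [QuotientGroup.mk'_apply, QuotientGroup.eq_one_iff]
        exact (le_sup_left : SA ≤ S) (Subgroup.mem_map.mpr ⟨x, hx, rfl⟩)
      intro hdvd
      rw [hrange, hcard] at hdvd
      exact QA.not_dvd_index (hdvd.trans (Subgroup.index_dvd_of_le hle))
    have hcardB : ¬ p ∣ Nat.card ↥(B.map q) := by
      set f := q.comp B.subtype with hf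
      have hrange : B.map q = f.range := by
        rw [hf, MonoidHom.range_comp, Subgroup.range_subtype]
      have hcard : Nat.card ↥f.range = f.ker.index := (Subgroup.index_ker f).symm
      have hle : (QB : Subgroup ↥B) ≤ f.ker := by
        intro x hx
        rw [MonoidHom.mem_ker]
        show q (B.subtype x) = 1
        rw [QuotientGroup.mk'_apply, QuotientGroup.eq_one_iff]
        exact (le_sup_right : SB ≤ S) (Subgroup.mem_map.mpr ⟨x, hx, rfl⟩)
      intro hdvd
      rw [hrange, hcard] at hdvd
      exact QB.not_dvd_index (hdvd.trans (Subgroup.index_dvd_of_le hle))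
    have hsup' : (A.map q) ⊔ (B.map q) = ⊤ := by
      rw [← Subgroup.map_sup, hsup]
      exact Subgroup.map_top_of_surjective _ (QuotientGroup.mk'_surjective S)
    have hdvd2 : Nat.card (X ⧸ S) ∣ Nat.card ↥(A.map q) * Nat.card ↥(B.map q) := by
      have hnA : (A.map q).Normal := hAn.map q (QuotientGroup.mk'_surjective S)
      have h := card_sup_dvd (B := B.map q) hnA
      rw [hsup', Subgroup.card_top] at h
      exact h
    rw [Subgroup.index_eq_card]
    intro hdvd
    rcases (Nat.Prime.dvd_mul hp.out).mp (hdvd.trans hdvd2) with h | h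
    · exact hcardA h
    · exact hcardB h
  -- S is a normal Sylow subgroup, hence the unique one
  haveI := Sylow.unique_of_normal (hSp.toSylow hidx) hSn
  have hPS : P = hSp.toSylow hidx := Subsingleton.elim _ _
  rw [hPS]
  exact hSn

theorem fitting_sup [Finite X] {D A B : Subgroup X}
    (hAD : A ≤ D) (hBD : B ≤ D)
    (hA : ∀ g ∈ D, ∀ x ∈ A, g * x * g⁻¹ ∈ A) (hB : ∀ g ∈ D, ∀ x ∈ B, g * x * g⁻¹ ∈ B)
    (hAn : Group.IsNilpotent ↥A) (hBn : Group.IsNilpotent ↥B) :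
    Group.IsNilpotent ↥(A ⊔ B) := by
  have hKD : A ⊔ B ≤ D := sup_le hAD hBD
  have hA' : (A.subgroupOf (A ⊔ B)).Normal := by
    constructor
    intro n hn g
    rw [Subgroup.mem_subgroupOf] at hn ⊢
    simpa using hA g.1 (hKD g.2) n.1 hn
  have hB' : (B.subgroupOf (A ⊔ B)).Normal := by
    constructor
    intro n hn g
    rw [Subgroup.mem_subgroupOf] at hn ⊢
    simpa using hB g.1 (hKD g.2) n.1 hn
  haveI := hAn
  haveI := hBn
  have nA' : Group.IsNilpotent ↥(A.subgroupOf (A ⊔ B)) :=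
    nilpotent_of_mulEquiv (Subgroup.subgroupOfEquivOfLe (le_sup_left : A ≤ A ⊔ B)).symm
  have nB' : Group.IsNilpotent ↥(B.subgroupOf (A ⊔ B)) :=
    nilpotent_of_mulEquiv (Subgroup.subgroupOfEquivOfLe (le_sup_right : B ≤ A ⊔ B)).symm
  have hsup' : A.subgroupOf (A ⊔ B) ⊔ B.subgroupOf (A ⊔ B) = ⊤ := by
    rw [eq_top_iff]
    rintro ⟨x, hx⟩ -
    obtain ⟨a, ha, b, hb, hab⟩ :=
      mem_sup_of_conj (fun b hb a ha => hA b (hBD hb) a ha) hx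
    have haK : a ∈ A ⊔ B := (le_sup_left : A ≤ A ⊔ B) ha
    have hbK : b ∈ A ⊔ B := (le_sup_right : B ≤ A ⊔ B) hb
    have hx2 : (⟨x, hx⟩ : ↥(A ⊔ B)) = ⟨a, haK⟩ * ⟨b, hbK⟩ := Subtype.ext (by simp [hab])
    rw [hx2]
    exact mul_mem
      ((le_sup_left : A.subgroupOf (A ⊔ B) ≤ _) (Subgroup.mem_subgroupOf.mpr ha))
      ((le_sup_right : B.subgroupOf (A ⊔ B) ≤ _) (Subgroup.mem_subgroupOf.mpr hb))
  exact fitting_top hA' hB' nA' nB' hsup'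

end FiniteGroupTheory

section LevelImages

variable {d : ℕ}

theorem map_levelHom_topologicalClosure (K : Subgroup (AutT d)) (m : ℕ) :
    K.topologicalClosure.map (levelHom d m) = K.map (levelHom d m) := by
  apply le_antisymm
  · rintro _ ⟨g, hg, rfl⟩
    have hg' : g ∈ _root_.closure (K : Set (AutT d)) := hg
    have hUeq : {h : AutT d | ∀ w : LevelV d m, h.toPerm w.1 = g.toPerm w.1} =
        ⋂ w : LevelV d m, {h : AutT d | h.toPerm w.1 = g.toPerm w.1} := by
      ext h
      simp [Set.mem_iInter]
    have hU : IsOpen {h : AutT d | ∀ w : LevelV d m, h.toPerm w.1 = g.toPerm w.1} := by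
      rw [hUeq]
      exact isOpen_iInter_of_finite fun w => isOpen_ev_eq _ _
    have hgU : g ∈ {h : AutT d | ∀ w : LevelV d m, h.toPerm w.1 = g.toPerm w.1} :=
      fun w => rfl
    obtain ⟨x, hxU, hxK⟩ := _root_.mem_closure_iff.mp hg' _ hU hgU
    refine Subgroup.mem_map.mpr ⟨x, hxK, ?_⟩
    exact Equiv.ext fun w => Subtype.ext (hxU w)
  · exact Subgroup.map_mono (Subgroup.le_topologicalClosure K)

theorem nilpotent_map_secSG {K : Subgroup (AutT d)} {v : Vertex d} {m : ℕ}
    (h : Group.IsNilpotent ↥(K.map (levelHom d (v.length + m)))) :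
    Group.IsNilpotent ↥((secSG d K v).map (levelHom d m)) := by
  set B := K ⊓ stabT d v with hB
  set f : ↥B →* Equiv.Perm (LevelV d m) :=
    (levelHom d m).comp ((secHom d v).comp (Subgroup.inclusion inf_le_right)) with hf
  set g' : ↥B →* Equiv.Perm (LevelV d (v.length + m)) :=
    (levelHom d (v.length + m)).comp B.subtype with hg'
  have hker : g'.ker ≤ f.ker := by
    intro x hx
    rw [MonoidHom.mem_ker] at hx ⊢
    have hst : (x : AutT d) ∈ levelStab d (v.length + m) := levelHom_eq_one_iff.mp hx
    show levelHom d m (sec (x : AutT d) v) = 1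
    apply levelHom_eq_one_iff.mpr
    intro u hu
    rw [sec_apply]
    have hxvu : (x : AutT d).toPerm (v ++ u) = v ++ u := hst (v ++ u) (by simp [hu])
    rw [hxvu, List.drop_left]
  have hrange : f.range = (secSG d K v).map (levelHom d m) := by
    rw [hf, MonoidHom.range_comp, MonoidHom.range_comp, Subgroup.inclusion_range]
    show (((K ⊓ stabT d v).subgroupOf (stabT d v)).map (secHom d v)).map (levelHom d m) = _
    have : (K ⊓ stabT d v).subgroupOf (stabT d v) = K.subgroupOf (stabT d v) := by
      ext x
      rw [Subgroup.mem_subgroupOf, Subgroup.mem_subgroupOf, Subgroup.mem_inf]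
      exact ⟨fun h' => h'.1, fun h' => ⟨h', x.2⟩⟩
    rw [this]
    rfl
  have hC : Group.IsNilpotent ↥g'.range := by
    have hr : g'.range = B.map (levelHom d (v.length + m)) := by
      rw [hg', MonoidHom.range_comp, Subgroup.range_subtype]
    rw [hr]
    exact nilpotent_of_le (Subgroup.map_mono inf_le_left) h
  haveI := hC
  haveI : Group.IsNilpotent (↥B ⧸ g'.ker) :=
    nilpotent_of_mulEquiv (QuotientGroup.quotientKerEquivRange g').symm
  set fbar := QuotientGroup.lift g'.ker f (fun x hx => MonoidHom.mem_ker.mp (hker hx))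
    with hfbar
  have hr2 : f.range = fbar.range := by
    ext y
    constructor
    · rintro ⟨x, rfl⟩
      exact ⟨QuotientGroup.mk x, rfl⟩
    · rintro ⟨q, rfl⟩
      obtain ⟨x, rfl⟩ := QuotientGroup.mk_surjective q
      exact ⟨x, rfl⟩
  rw [← hrange, hr2]
  exact nilpotent_of_surjective fbar.rangeRestrict (MonoidHom.rangeRestrict_surjective fbar)

theorem nilpotent_map_of_pronil {K : Subgroup (AutT d)} (hK : Pronilpotent K) (m : ℕ) :
    Group.IsNilpotent ↥(K.map (levelHom d m)) := by
  set f : ↥K →* Equiv.Perm (LevelV d m) := (levelHom d m).comp K.subtype with hf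
  have hopen : IsOpen (f.ker : Set ↥K) := by
    have heq : (f.ker : Set ↥K) =
        Subtype.val ⁻¹' ((levelStab d m : Subgroup (AutT d)) : Set (AutT d)) := by
      ext x
      simp only [Set.mem_preimage, SetLike.mem_coe, MonoidHom.mem_ker]
      exact levelHom_eq_one_iff
    rw [heq]
    exact (isOpen_levelStab m).preimage continuous_subtype_val
  haveI : Group.IsNilpotent (↥K ⧸ f.ker) := hK f.ker hopen
  have hr : K.map (levelHom d m) = f.range := by
    rw [hf, MonoidHom.range_comp, Subgroup.range_subtype]
  rw [hr]
  exact nilpotent_of_mulEquiv (QuotientGroup.quotientKerEquivRange f)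

end LevelImages

/-- The approximating chain of subgroups for the self-similar closure. -/
noncomputable def chainK (d : ℕ) (H : Subgroup (AutT d)) (e : ℕ → Vertex d) :
    ℕ → Subgroup (AutT d)
  | 0 => H
  | n + 1 => (chainK d H e n ⊔ secSG d (chainK d H e n) (e n)).topologicalClosure

end TreeDyn

namespace TreeDyn

open AutT in
/-- **Open normal pronilpotent subgroups are self-similarity-closed.**
Let `d ≥ 2` and let `G` be a closed fractal subgroup of `Aut T_d`.  If `H` is an open
normal subgroup of `G` that is pronilpotent, then the self-similar closure of `H` in `G`
is an open, normal, pronilpotent subgroup of `G`. -/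
theorem pronilpotent_selfSimilarClosure (d : ℕ) (hd : 2 ≤ d)
    (G : Subgroup (AutT d)) (hGclosed : IsClosed (G : Set (AutT d)))
    (hGfractal : IsFractal d G)
    (H : Subgroup (AutT d)) (hHG : H ≤ G)
    (hHopen : IsOpen ((H.subgroupOf G) : Set G))
    (hHnormal : (H.subgroupOf G).Normal)
    (hHnilp : Pronilpotent H) :
    ∀ J : Subgroup (AutT d), IsSelfSimilarClosure d G H J →
      IsOpen ((J.subgroupOf G) : Set G) ∧ (J.subgroupOf G).Normal ∧ Pronilpotent J := by
  intro J hJ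
  obtain ⟨hHJ, hJG, hJclosed, hJss, hJmin⟩ := hJ
  have hd0 : 0 < d := by omega
  -- unbundled normality of `H` in `G`
  have hHnrm : IsConjInv G H := by
    intro g hg x hx
    have h1 := hHnormal.conj_mem ⟨x, hHG hx⟩ (Subgroup.mem_subgroupOf.mpr hx) ⟨g, hg⟩
    rw [Subgroup.mem_subgroupOf] at h1
    simpa using h1
  -- (a) openness
  have hHJsub : H.subgroupOf G ≤ J.subgroupOf G := fun x hx =>
    Subgroup.mem_subgroupOf.mpr (hHJ (Subgroup.mem_subgroupOf.mp hx))
  have hopen : IsOpen ((J.subgroupOf G : Subgroup ↥G) : Set ↥G) :=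
    Subgroup.isOpen_mono hHJsub hHopen
  -- (b) normality, via the conjugation-stable competitor
  have hNJ : ∃ NJ : Subgroup (AutT d), (NJ : Set (AutT d)) = {x | ∀ g ∈ G, g * x * g⁻¹ ∈ J} := by
    refine ⟨{ carrier := {x | ∀ g ∈ G, g * x * g⁻¹ ∈ J}
              one_mem' := fun g hg => by simpa using one_mem J
              mul_mem' := by
                intro a b ha hb g hg
                have h : g * (a * b) * g⁻¹ = (g * a * g⁻¹) * (g * b * g⁻¹) := by group
                show g * (a * b) * g⁻¹ ∈ J
                rw [h]
                exact mul_mem (ha g hg) (hb g hg)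
              inv_mem' := by
                intro a ha g hg
                have h : g * a⁻¹ * g⁻¹ = (g * a * g⁻¹)⁻¹ := by group
                show g * a⁻¹ * g⁻¹ ∈ J
                rw [h]
                exact inv_mem (ha g hg) }, rfl⟩
  obtain ⟨NJ, hNJset⟩ := hNJ
  have hNJmem : ∀ x : AutT d, x ∈ NJ ↔ ∀ g ∈ G, g * x * g⁻¹ ∈ J := by
    intro x
    constructor
    · intro hx
      have : x ∈ (NJ : Set (AutT d)) := hx
      rwa [hNJset] at this
    · intro hx
      have : x ∈ (NJ : Set (AutT d)) := by rw [hNJset]; exact hx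
      exact this
  have hHNJ : H ≤ NJ := fun x hx => (hNJmem x).mpr fun g hg => hHJ (hHnrm g hg x hx)
  have hNJG : NJ ≤ G := by
    intro x hx
    have h1 := (hNJmem x).mp hx 1 (one_mem G)
    simp only [one_mul, inv_one, mul_one] at h1
    exact hJG h1
  have hNJclosed : IsClosed (NJ : Set (AutT d)) := by
    rw [hNJset]
    have heq : {x : AutT d | ∀ g ∈ G, g * x * g⁻¹ ∈ J} =
        ⋂ g : ↥G, (fun x : AutT d => g.1 * x * g.1⁻¹) ⁻¹' (J : Set (AutT d)) := by
      ext x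
      simp only [Set.mem_iInter, Set.mem_preimage, SetLike.mem_coe, Set.mem_setOf_eq]
      exact ⟨fun h g => h g.1 g.2, fun h g hg => h ⟨g, hg⟩⟩
    rw [heq]
    exact isClosed_iInter fun g => hJclosed.preimage (continuous_conj g.1)
  have hNJss : IsSelfSimilar d NJ := by
    intro v x hx
    obtain ⟨n, hnNJ, hns, rfl⟩ := secSG_elim hx
    apply (hNJmem _).mpr
    intro g hg
    obtain ⟨k, hkG, hks, hkv⟩ := hGfractal.surj (v := v) hg
    have h1 : k * n * k⁻¹ ∈ J := (hNJmem n).mp hnNJ k hkG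
    have h2 : k * n ∈ stabT d v := mul_mem hks hns
    have h3 := sec_mem_secSG h1 (mul_mem h2 (inv_mem hks))
    have h4 := hJss v h3
    rwa [sec_mul h2 (inv_mem hks), sec_mul hks hns, sec_inv hks, hkv] at h4
  have hJNJ : J ≤ NJ := hJmin NJ hHNJ hNJG hNJclosed hNJss
  have hJnrm : IsConjInv G J := fun g hg x hx => (hNJmem x).mp (hJNJ hx) g hg
  have hnormal : (J.subgroupOf G).Normal := by
    constructor
    intro n hn g
    rw [Subgroup.mem_subgroupOf] at hn ⊢
    simpa using hJnrm g.1 g.2 n.1 hn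
  refine ⟨hopen, hnormal, ?_⟩
  -- (c) pronilpotency
  haveI : Nonempty (Vertex d) := ⟨[]⟩
  obtain ⟨e0, he0⟩ := exists_surjective_nat (Vertex d)
  set e : ℕ → Vertex d := fun t => e0 (Nat.unpair t).2 with he
  have hecov : ∀ (n : ℕ) (v : Vertex d), ∃ t, n ≤ t ∧ e t = v := by
    intro n v
    obtain ⟨j, hj⟩ := he0 v
    exact ⟨Nat.pair n j, Nat.left_le_pair n j, by simp [he, Nat.unpair_pair, hj]⟩
  set C : ℕ → Subgroup (AutT d) := chainK d H e with hCdef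
  have hC0 : C 0 = H := rfl
  have hCsucc : ∀ n, C (n + 1) = (C n ⊔ secSG d (C n) (e n)).topologicalClosure :=
    fun n => rfl
  have hCmono : Monotone C :=
    monotone_nat_of_le_succ fun n => by
      rw [hCsucc n]
      exact le_sup_left.trans (Subgroup.le_topologicalClosure _)
  have hCG : ∀ n, C n ≤ G := by
    intro n
    induction n with
    | zero => exact hHG
    | succ n ih =>
      rw [hCsucc n]
      refine Subgroup.topologicalClosure_minimal _ (sup_le ih ?_) hGclosed
      exact (secSG_mono ih _).trans (le_of_eq (hGfractal _))
  have hCnrm : ∀ n, IsConjInv G (C n) := by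
    intro n
    induction n with
    | zero => exact hHnrm
    | succ n ih =>
      rw [hCsucc n]
      exact (ih.sup (ih.secSG hGfractal _)).closure
  have hCJ : ∀ n, C n ≤ J := by
    intro n
    induction n with
    | zero => exact hHJ
    | succ n ih =>
      rw [hCsucc n]
      refine Subgroup.topologicalClosure_minimal _ (sup_le ih ?_) hJclosed
      exact (secSG_mono ih _).trans (hJss _)
  have hCnilp : ∀ n m, Group.IsNilpotent ↥((C n).map (levelHom d m)) := by
    intro n
    induction n with
    | zero => exact fun m => nilpotent_map_of_pronil hHnilp m
    | succ n ih =>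
      intro m
      rw [hCsucc n, map_levelHom_topologicalClosure, Subgroup.map_sup]
      refine fitting_sup (D := G.map (levelHom d m)) (Subgroup.map_mono (hCG n))
        (Subgroup.map_mono ((secSG_mono (hCG n) _).trans (le_of_eq (hGfractal _))))
        ?_ ?_ (ih m) (nilpotent_map_secSG (ih _))
      · rintro _ ⟨g, hg, rfl⟩ _ ⟨x, hx, rfl⟩
        refine Subgroup.mem_map.mpr ⟨g * x * g⁻¹, hCnrm n g hg x hx, ?_⟩
        simp only [map_mul, map_inv]
      · rintro _ ⟨g, hg, rfl⟩ _ ⟨x, hx, rfl⟩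
        refine Subgroup.mem_map.mpr ⟨g * x * g⁻¹, ((hCnrm n).secSG hGfractal _) g hg x hx, ?_⟩
        simp only [map_mul, map_inv]
  -- the closure of the union of the chain is a closed self-similar subgroup between `H` and `G`
  set Kw : Subgroup (AutT d) := (⨆ n, C n).topologicalClosure with hKw
  have hdir : Directed (· ≤ ·) C := hCmono.directed_le
  have hKwss : IsSelfSimilar d Kw := by
    intro v x hx
    obtain ⟨g, hgKw, hgs, rfl⟩ := secSG_elim hx
    have hgc : g ∈ _root_.closure ((⨆ n, C n : Subgroup (AutT d)) : Set (AutT d)) := hgKw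
    have h1 : g ∈ _root_.closure (((stabT d v : Subgroup (AutT d)) : Set (AutT d)) ∩
        ((⨆ n, C n : Subgroup (AutT d)) : Set (AutT d))) :=
      (isOpen_stabT v).inter_closure ⟨hgs, hgc⟩
    have h2 : sec g v ∈ _root_.closure ((fun y : AutT d => sec y v) ''
        (((stabT d v : Subgroup (AutT d)) : Set (AutT d)) ∩
          ((⨆ n, C n : Subgroup (AutT d)) : Set (AutT d)))) :=
      image_closure_subset_closure_image (continuous_sec v) ⟨g, h1, rfl⟩
    have hsub : ((fun y : AutT d => sec y v) ''
        (((stabT d v : Subgroup (AutT d)) : Set (AutT d)) ∩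
          ((⨆ n, C n : Subgroup (AutT d)) : Set (AutT d)))) ⊆
        ((⨆ n, C n : Subgroup (AutT d)) : Set (AutT d)) := by
      rintro _ ⟨y, ⟨hys, hyC⟩, rfl⟩
      obtain ⟨n, hn⟩ := (Subgroup.mem_iSup_of_directed hdir).mp hyC
      obtain ⟨t, hnt, het⟩ := hecov n v
      have hyt : y ∈ C t := hCmono hnt hn
      have hsecmem : sec y v ∈ secSG d (C t) (e t) := by
        rw [het]
        exact sec_mem_secSG hyt hys
      have hst : secSG d (C t) (e t) ≤ C (t + 1) := by
        rw [hCsucc t]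
        exact le_sup_right.trans (Subgroup.le_topologicalClosure _)
      exact SetLike.mem_coe.mpr (le_iSup C (t + 1) (hst hsecmem))
    show sec g v ∈ _root_.closure ((⨆ n, C n : Subgroup (AutT d)) : Set (AutT d))
    exact closure_mono hsub h2
  have hKwG : Kw ≤ G :=
    Subgroup.topologicalClosure_minimal _ (iSup_le hCG) hGclosed
  have hHKw : H ≤ Kw := (le_iSup C 0).trans (Subgroup.le_topologicalClosure _)
  have hJKw : J ≤ Kw := hJmin Kw hHKw hKwG (Subgroup.isClosed_topologicalClosure _) hKwss
  -- nilpotency of the level images of J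
  have hJnilp : ∀ m, Group.IsNilpotent ↥(J.map (levelHom d m)) := by
    intro m
    set T : ℕ → Subgroup (Equiv.Perm (LevelV d m)) := fun n => (C n).map (levelHom d m)
      with hT
    have hTmono : Monotone T := fun a b hab => Subgroup.map_mono (hCmono hab)
    have hle : J.map (levelHom d m) ≤ ⨆ n, T n := by
      calc J.map (levelHom d m) ≤ Kw.map (levelHom d m) := Subgroup.map_mono hJKw
        _ = (⨆ n, C n).map (levelHom d m) := map_levelHom_topologicalClosure _ m
        _ = ⨆ n, T n := Subgroup.map_iSup _ _
    obtain ⟨N, hN⟩ : ∃ N, (⨆ n, T n) ≤ T N := by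
      classical
      have hmem : ∀ x : ((⨆ n, T n : Subgroup (Equiv.Perm (LevelV d m))) :
          Set (Equiv.Perm (LevelV d m))), ∃ k, (x : Equiv.Perm (LevelV d m)) ∈ T k :=
        fun x => (Subgroup.mem_iSup_of_directed hTmono.directed_le).mp x.2
      choose idx hidx using hmem
      haveI : Fintype ((⨆ n, T n : Subgroup (Equiv.Perm (LevelV d m))) :
          Set (Equiv.Perm (LevelV d m))) := Fintype.ofFinite _
      refine ⟨Finset.univ.sup idx, ?_⟩
      intro y hy
      exact hTmono (Finset.le_sup (Finset.mem_univ
        (⟨y, hy⟩ : ((⨆ n, T n : Subgroup (Equiv.Perm (LevelV d m))) :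
          Set (Equiv.Perm (LevelV d m)))))) (hidx ⟨y, hy⟩)
    exact nilpotent_of_le (hle.trans hN) (hCnilp N m)
  -- conclude pronilpotency
  intro N hNnormal hNopen
  obtain ⟨m, hm⟩ := exists_levelStab_subtype hd0 hNopen (one_mem N)
  set f : ↥J →* Equiv.Perm (LevelV d m) := (levelHom d m).comp J.subtype with hfd
  have hker : f.ker ≤ N := by
    intro x hx
    rw [MonoidHom.mem_ker] at hx
    exact hm x (levelHom_eq_one_iff.mp hx)
  haveI : Group.IsNilpotent ↥f.range := by
    have hr : f.range = J.map (levelHom d m) := by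
      rw [hfd, MonoidHom.range_comp, Subgroup.range_subtype]
    rw [hr]
    exact hJnilp m
  haveI : Group.IsNilpotent (↥J ⧸ f.ker) :=
    nilpotent_of_mulEquiv (QuotientGroup.quotientKerEquivRange f).symm
  have hcomap : f.ker ≤ N.comap (MonoidHom.id ↥J) := by
    simpa using hker
  have hsurj : Function.Surjective (QuotientGroup.map f.ker N (MonoidHom.id ↥J) hcomap) := by
    intro q
    obtain ⟨x, rfl⟩ := QuotientGroup.mk_surjective q
    exact ⟨QuotientGroup.mk x, rfl⟩
  exact nilpotent_of_surjective _ hsurj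

end TreeDyn
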